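/- The numerical range of a complex square matrix A, defined as W(A) = { x*Ax : x ∈ ℂⁿ, ‖x‖ = 1 }, is a convex subset of ℂ. -/

import Mathlib

open Matrix

lemma quad_expand {n : ℕ} (A : Matrix (Fin n) (Fin n) ℂ) (a b : ℂ) (u v : Fin n → ℂ) :
    star (a•u + b•v) ⬝ᵥ (A *ᵥ (a•u+b•v)) =
      star a * a * (star u ⬝ᵥ (A *ᵥ u)) + star a * b * (star u ⬝ᵥ (A *ᵥ v)) +
      star b * a * (star v ⬝ᵥ (A *ᵥ u)) + star b * b * (star v ⬝ᵥ (A *ᵥ v)) := by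
  simp [Matrix.mulVec_add, Matrix.mulVec_smul, dotProduct_add, add_dotProduct,
    dotProduct_smul, smul_dotProduct, star_add, star_smul, smul_eq_mul]
  ring

lemma dot_expand {n : ℕ} (a b : ℂ) (u v : Fin n → ℂ) :
    star (a•u + b•v) ⬝ᵥ (a•u+b•v) =
      star a * a * (star u ⬝ᵥ u) + star a * b * (star u ⬝ᵥ v) +
      star b * a * (star v ⬝ᵥ u) + star b * b * (star v ⬝ᵥ v) := by
  have := quad_expand (1 : Matrix (Fin n) (Fin n) ℂ) a b u v
  simpa [Matrix.one_mulVec] using this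

lemma key {n : ℕ} (B : Matrix (Fin n) (Fin n) ℂ) (u v : Fin n → ℂ)
    (hu : star u ⬝ᵥ u = 1) (hv : star v ⬝ᵥ v = 1)
    (hu0 : star u ⬝ᵥ (B *ᵥ u) = 0) (hv1 : star v ⬝ᵥ (B *ᵥ v) = 1)
    (s : ℝ) (hs : s ∈ Set.Icc (0:ℝ) 1) :
    ∃ y : Fin n → ℂ, star y ⬝ᵥ y = 1 ∧ star y ⬝ᵥ (B *ᵥ y) = (s : ℂ) := by
  set α := star u ⬝ᵥ (B *ᵥ v) with hα
  set β := star v ⬝ᵥ (B *ᵥ u) with hβ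
  set γ := α - star β with hγ
  set c : ℂ := if γ = 0 then 1 else star γ / (‖γ‖ : ℂ) with hcdef
  have hcc : star c * c = 1 := by
    rw [hcdef]
    split_ifs with h
    · simp
    · field_simp
      have hn : ((‖γ‖ : ℝ) : ℂ) ≠ 0 := by simpa using h
      simp only [RCLike.star_def, map_div₀, Complex.conj_conj, Complex.conj_ofReal]
      rw [mul_div_assoc', div_div, Complex.conj_mul', sq, div_self (mul_ne_zero hn hn)]
  set ρ : ℂ := c * α + star c * β with hρdef
  have hρim : ρ.im = 0 := by
    have hργ : ρ.im = (c * γ).im := by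
      rw [hρdef, hγ]
      simp only [Complex.add_im, Complex.mul_im, Complex.sub_im, Complex.sub_re]
      simp only [RCLike.star_def, Complex.conj_re, Complex.conj_im]
      ring
    rw [hργ, hcdef]
    split_ifs with h
    · simp [h]
    · rw [show (star γ : ℂ) = (starRingEnd ℂ) γ from rfl, div_mul_eq_mul_div, mul_comm,
        Complex.mul_conj]
      simp
  have hρ : c * α + star c * β = ((ρ.re : ℝ) : ℂ) := by
    rw [← hρdef]
    exact Complex.ext rfl (by simp [hρim])
  set δ := star u ⬝ᵥ v with hδ
  have hδ' : star v ⬝ᵥ u = star δ := by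
    rw [hδ]; simp [dotProduct, Finset.sum_comm, mul_comm]
  set m : ℝ := 2 * (c * δ).re with hm
  have hmδ : c * δ + star c * star δ = ((m : ℝ) : ℂ) := by
    rw [hm, show star c * star δ = (starRingEnd ℂ) (c * δ) by simp [mul_comm], Complex.add_conj]
  -- the path
  set x : ℝ → (Fin n → ℂ) := fun t => ((1 - t : ℝ) : ℂ) • u + (((t : ℝ) : ℂ) * c) • v with hx
  set P : ℝ → ℝ := fun t => t^2 + t*(1-t)*ρ.re with hP
  set Q : ℝ → ℝ := fun t => (1-t)^2 + t^2 + t*(1-t)*m with hQ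
  have hstar1 : ∀ t : ℝ, star (((1 - t : ℝ) : ℂ)) = ((1 - t : ℝ) : ℂ) := by
    intro t; simp [RCLike.star_def, Complex.conj_ofReal]
  have hstar2 : ∀ t : ℝ, star ((((t : ℝ) : ℂ)) * c) = ((t : ℝ) : ℂ) * star c := by
    intro t; simp [RCLike.star_def, Complex.conj_ofReal, mul_comm]
  have hp : ∀ t : ℝ, star (x t) ⬝ᵥ (B *ᵥ x t) = ((P t : ℝ) : ℂ) := by
    intro t
    rw [hx]
    rw [quad_expand B _ _ u v, ← hα, ← hβ, hu0, hv1, hstar1, hstar2, hP]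
    push_cast
    linear_combination ((t:ℂ) * (1-t)) * hρ + (t:ℂ)^2 * hcc
  have hq : ∀ t : ℝ, star (x t) ⬝ᵥ (x t) = ((Q t : ℝ) : ℂ) := by
    intro t
    rw [hx]
    rw [dot_expand _ _ u v, ← hδ, hδ', hu, hv, hstar1, hstar2, hQ]
    push_cast
    linear_combination ((t:ℂ) * (1-t)) * hmδ + (t:ℂ)^2 * hcc
  -- x t ≠ 0 on [0,1]
  have hxne : ∀ t : ℝ, t ∈ Set.Icc (0:ℝ) 1 → x t ≠ 0 := by
    intro t ht h0
    have he : ((1 - t : ℝ) : ℂ) • u = -((((t : ℝ) : ℂ) * c) • v) := by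
      rw [hx] at h0
      exact eq_neg_of_add_eq_zero_left h0
    have h1 : star (((1 - t : ℝ) : ℂ) • u) ⬝ᵥ (B *ᵥ (((1 - t : ℝ) : ℂ) • u))
        = star (-((((t : ℝ) : ℂ) * c) • v)) ⬝ᵥ (B *ᵥ (-((((t : ℝ) : ℂ) * c) • v))) := by
      rw [he]
    simp only [star_smul, star_neg, Matrix.mulVec_smul, Matrix.mulVec_neg, smul_dotProduct,
      dotProduct_smul, dotProduct_neg, neg_dotProduct, neg_neg, smul_eq_mul] at h1
    rw [hu0, hv1, hstar1, hstar2] at h1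
    have h2 : ((t:ℂ))^2 = 0 := by
      linear_combination -h1 - (t:ℂ)^2 * hcc
    have ht0 : t = 0 := by exact_mod_cast pow_eq_zero_iff (n := 2) (by norm_num) |>.mp h2
    rw [ht0] at h0
    rw [hx] at h0
    simp at h0
    rw [h0] at hu
    simp at hu
  have hQpos : ∀ t : ℝ, t ∈ Set.Icc (0:ℝ) 1 → 0 < Q t := by
    intro t ht
    have h1 : star (x t) ⬝ᵥ (x t) = ((Q t : ℝ) : ℂ) := hq t
    have h2 : star (x t) ⬝ᵥ (x t) = ((∑ i, Complex.normSq (x t i) : ℝ) : ℂ) := by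
      push_cast
      simp [dotProduct, Complex.normSq_eq_conj_mul_self]
    have h3 : Q t = ∑ i, Complex.normSq (x t i) := by
      have := h1.symm.trans h2
      exact_mod_cast this
    rw [h3]
    have hne := hxne t ht
    obtain ⟨i, hi⟩ : ∃ i, x t i ≠ 0 := by
      by_contra hcon
      push_neg at hcon
      exact hne (funext hcon)
    exact Finset.sum_pos' (fun j _ => Complex.normSq_nonneg _)
      ⟨i, Finset.mem_univ i, Complex.normSq_pos.mpr hi⟩
  -- IVT
  set f : ℝ → ℝ := fun t => P t / Q t with hf
  have hcont : ContinuousOn f (Set.Icc (0:ℝ) 1) := by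
    apply ContinuousOn.div
    · fun_prop
    · fun_prop
    · intro t ht; exact ne_of_gt (hQpos t ht)
  have hf0 : f 0 = 0 := by simp [hf, hP, hQ]
  have hf1 : f 1 = 1 := by simp [hf, hP, hQ]
  have hsub := intermediate_value_Icc (by norm_num : (0:ℝ) ≤ 1) hcont
  rw [hf0, hf1] at hsub
  obtain ⟨t, ht, hts⟩ := hsub hs
  -- normalize
  refine ⟨(((Real.sqrt (Q t))⁻¹ : ℝ) : ℂ) • x t, ?_, ?_⟩
  · rw [star_smul, smul_dotProduct, dotProduct_smul, hq t, smul_eq_mul, smul_eq_mul]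
    rw [show star ((((Real.sqrt (Q t))⁻¹ : ℝ)) : ℂ) = (((Real.sqrt (Q t))⁻¹ : ℝ) : ℂ) by
      simp [RCLike.star_def, Complex.conj_ofReal]]
    rw [← Complex.ofReal_mul, ← Complex.ofReal_mul]
    norm_cast
    have h2 : Real.sqrt (Q t) * Real.sqrt (Q t) = Q t := Real.mul_self_sqrt (hQpos t ht).le
    have h3 : Real.sqrt (Q t) ≠ 0 := ne_of_gt (Real.sqrt_pos.mpr (hQpos t ht))
    field_simp
    rw [sq, h2]
  · rw [Matrix.mulVec_smul, star_smul, smul_dotProduct, dotProduct_smul, hp t,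
      smul_eq_mul, smul_eq_mul]
    rw [show star ((((Real.sqrt (Q t))⁻¹ : ℝ)) : ℂ) = (((Real.sqrt (Q t))⁻¹ : ℝ) : ℂ) by
      simp [RCLike.star_def, Complex.conj_ofReal]]
    rw [← Complex.ofReal_mul, ← Complex.ofReal_mul]
    norm_cast
    have h2 : Real.sqrt (Q t) * Real.sqrt (Q t) = Q t := Real.mul_self_sqrt (hQpos t ht).le
    have h3 : Real.sqrt (Q t) ≠ 0 := ne_of_gt (Real.sqrt_pos.mpr (hQpos t ht))
    have h4 : P t = s * Q t := by
      have := hts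
      rw [hf] at this
      exact (div_eq_iff (ne_of_gt (hQpos t ht))).mp this
    field_simp
    rw [sq, h2, mul_comm]
    exact h4

lemma shift_quad {n : ℕ} (A : Matrix (Fin n) (Fin n) ℂ) (d p : ℂ) (x : Fin n → ℂ)
    (hx : star x ⬝ᵥ x = 1) :
    star x ⬝ᵥ ((d • (A - p • (1 : Matrix (Fin n) (Fin n) ℂ))) *ᵥ x)
      = d * (star x ⬝ᵥ (A *ᵥ x)) - d * p := by
  simp [Matrix.smul_mulVec, Matrix.sub_mulVec, Matrix.one_mulVec, dotProduct_sub,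
    dotProduct_smul, hx, smul_eq_mul]
  ring

/-- The numerical range of a complex square matrix. -/
def numRange {n : ℕ} (A : Matrix (Fin n) (Fin n) ℂ) : Set ℂ :=
  {z | ∃ x : Fin n → ℂ, star x ⬝ᵥ x = 1 ∧ z = star x ⬝ᵥ (A *ᵥ x)}

/-- Toeplitz–Hausdorff: the numerical range of a complex square matrix is convex. -/
theorem numRange_convex (n : ℕ) (A : Matrix (Fin n) (Fin n) ℂ) :
    Convex ℝ (numRange A) := by
  intro p hp q hq ta tb hta htb habt
  obtain ⟨u, hu1, hup⟩ := hp
  obtain ⟨v, hv1, hvq⟩ := hq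
  by_cases hpq : p = q
  · refine ⟨u, hu1, ?_⟩
    rw [← hup, hpq]
    rw [show ta • q + tb • q = (ta + tb) • q by rw [add_smul], habt, one_smul]
  · set B : Matrix (Fin n) (Fin n) ℂ :=
      (q - p)⁻¹ • (A - p • (1 : Matrix (Fin n) (Fin n) ℂ)) with hB
    have hqp : q - p ≠ 0 := sub_ne_zero.mpr (Ne.symm hpq)
    have hBu : star u ⬝ᵥ (B *ᵥ u) = 0 := by
      rw [hB, shift_quad A _ p u hu1, ← hup]
      ring
    have hBv : star v ⬝ᵥ (B *ᵥ v) = 1 := by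
      rw [hB, shift_quad A _ p v hv1, ← hvq]
      field_simp
    have htb1 : tb ∈ Set.Icc (0:ℝ) 1 := ⟨htb, by linarith⟩
    obtain ⟨y, hy1, hyB⟩ := key B u v hu1 hv1 hBu hBv tb htb1
    refine ⟨y, hy1, ?_⟩
    rw [hB, shift_quad A _ p y hy1] at hyB
    have hA : star y ⬝ᵥ (A *ᵥ y) = p + (q - p) * tb := by
      have := hyB
      field_simp at this
      linear_combination this
    rw [hA]
    have hta' : ta = 1 - tb := by linarith
    rw [hta']
    simp [Complex.real_smul]
    ring
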